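/- Let m ≥ 1, c ≥ 1, and let φ : ℤ/mℤ → ℂ satisfy Condition H(c): ‖φ‖_∞ ≤ c and |C(φ,a)| ≤ c√m for all a outside a set D with |D| ≤ c. Then for every interval I ⊆ ℤ/mℤ with |I| > √m, one has |∑_{n∈I} φ(n)| ≤ 6·c^{4/3}·|I|·(√m / |I|)^{1/3}. -/

import Mathlib

open Finset

/-- An interval in `ZMod m`: the injective reduction mod `m` of an interval of
consecutive integers. -/
def IsInterval {m : ℕ} (I : Finset (ZMod m)) : Prop :=
  ∃ a b : ℤ, Set.InjOn (Int.cast : ℤ → ZMod m) (Finset.Icc a b : Set ℤ) ∧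
    I = (Finset.Icc a b).image (Int.cast : ℤ → ZMod m)

/-- The additive autocorrelation of `φ` at shift `a`. -/
noncomputable def corr {m : ℕ} [NeZero m] (φ : ZMod m → ℂ) (a : ZMod m) : ℂ :=
  ∑ x : ZMod m, φ x * (starRingEnd ℂ) (φ (x + a))

section Helpers

lemma cube_rt_cube {x : ℝ} (hx : 0 ≤ x) : (x ^ ((1:ℝ)/3))^3 = x := by
  rw [← Real.rpow_natCast (x ^ ((1:ℝ)/3)) 3, ← Real.rpow_mul hx]
  norm_num

lemma cube_le_cube {a b : ℝ} (ha : 0 ≤ a) (hb : 0 ≤ b) (h : a^3 ≤ b^3) : a ≤ b :=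
  (pow_le_pow_iff_left₀ ha hb (by norm_num)).mp h

lemma sqrt_add_le' {x y : ℝ} (hx : 0 ≤ x) (hy : 0 ≤ y) :
    Real.sqrt (x + y) ≤ Real.sqrt x + Real.sqrt y := by
  have h : x + y ≤ (Real.sqrt x + Real.sqrt y)^2 := by
    rw [add_sq, Real.sq_sqrt hx, Real.sq_sqrt hy]
    nlinarith [Real.sqrt_nonneg x, Real.sqrt_nonneg y]
  calc Real.sqrt (x + y) ≤ Real.sqrt ((Real.sqrt x + Real.sqrt y)^2) := Real.sqrt_le_sqrt h
    _ = Real.sqrt x + Real.sqrt y := Real.sqrt_sq (by positivity)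

lemma shift_err {m : ℕ} [NeZero m] (φ : ZMod m → ℂ) (c : ℝ)
    (hφ : ∀ x, ‖φ x‖ ≤ c)
    (I : Finset (ZMod m)) (hI : IsInterval I) (t : ℕ) :
    ‖∑ n ∈ I, φ n - ∑ n ∈ I, φ (n + (t : ZMod m))‖ ≤ 2 * t * c := by
  obtain ⟨a, b, hinj, rfl⟩ := hI
  have hc0 : 0 ≤ c := le_trans (norm_nonneg _) (hφ 0)
  have h1 : ∑ n ∈ (Finset.Icc a b).image (Int.cast : ℤ → ZMod m), φ n
      = ∑ n ∈ Finset.Icc a b, φ (n : ZMod m) := Finset.sum_image fun x hx y hy h =>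
        hinj (by simpa using hx) (by simpa using hy) h
  have h2 : ∑ n ∈ (Finset.Icc a b).image (Int.cast : ℤ → ZMod m), φ (n + (t : ZMod m))
      = ∑ n ∈ Finset.Icc (a + t) (b + t), φ (n : ZMod m) := by
    rw [Finset.sum_image fun x hx y hy h => hinj (by simpa using hx) (by simpa using hy) h]
    rw [show Finset.Icc (a + (t:ℤ)) (b + t) = (Finset.Icc a b).map (addRightEmbedding (t:ℤ)) by
      simp [Finset.map_add_right_Icc]]
    rw [Finset.sum_map]
    simp [addRightEmbedding]
  rw [h1, h2, ← Finset.sum_sdiff_sub_sum_sdiff]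
  have key : ∀ (s : Finset ℤ), (s.card : ℝ) ≤ t → ‖∑ n ∈ s, φ (n : ZMod m)‖ ≤ t * c := by
    intro s hs
    calc ‖∑ n ∈ s, φ (n : ZMod m)‖ ≤ ∑ n ∈ s, ‖φ (n : ZMod m)‖ :=
          norm_sum_le _ _
      _ ≤ ∑ n ∈ s, c := Finset.sum_le_sum fun i _ => hφ _
      _ = s.card * c := by rw [Finset.sum_const, nsmul_eq_mul]
      _ ≤ t * c := by exact mul_le_mul_of_nonneg_right hs hc0
  have c1 : ((Finset.Icc a b \ Finset.Icc (a + t) (b + t)).card : ℝ) ≤ t := by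
    have hsub : Finset.Icc a b \ Finset.Icc (a + t) (b + t) ⊆ Finset.Ico a (a + t) := by
      intro x hx
      simp only [Finset.mem_sdiff, Finset.mem_Icc, Finset.mem_Ico, not_and, not_le] at hx ⊢
      refine ⟨hx.1.1, ?_⟩
      by_contra h
      push_neg at h
      exact absurd (hx.2 h) (not_lt.mpr (le_trans hx.1.2 (by linarith [Int.ofNat_nonneg t])))
    calc ((Finset.Icc a b \ Finset.Icc (a + t) (b + t)).card : ℝ)
        ≤ ((Finset.Ico a (a + (t:ℤ))).card : ℝ) := by exact_mod_cast Finset.card_le_card hsub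
      _ = t := by rw [Int.card_Ico]; simp
  have c2 : ((Finset.Icc (a + t) (b + t) \ Finset.Icc a b).card : ℝ) ≤ t := by
    have hsub : Finset.Icc (a + t) (b + t) \ Finset.Icc a b ⊆ Finset.Ioc b (b + t) := by
      intro x hx
      simp only [Finset.mem_sdiff, Finset.mem_Icc, Finset.mem_Ioc, not_and, not_le] at hx ⊢
      refine ⟨?_, hx.1.2⟩
      exact hx.2 (le_trans (by linarith [Int.ofNat_nonneg t]) hx.1.1)
    calc ((Finset.Icc (a + t) (b + t) \ Finset.Icc a b).card : ℝ)
        ≤ ((Finset.Ioc b (b + (t:ℤ))).card : ℝ) := by exact_mod_cast Finset.card_le_card hsub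
      _ = t := by rw [Int.card_Ioc]; simp
  calc ‖∑ n ∈ Finset.Icc a b \ Finset.Icc (a+t) (b+t), φ (n : ZMod m)
        - ∑ n ∈ Finset.Icc (a+t) (b+t) \ Finset.Icc a b, φ (n : ZMod m)‖
      ≤ ‖∑ n ∈ Finset.Icc a b \ Finset.Icc (a+t) (b+t), φ (n : ZMod m)‖
        + ‖∑ n ∈ Finset.Icc (a+t) (b+t) \ Finset.Icc a b, φ (n : ZMod m)‖ :=
        norm_sub_le _ _
    _ ≤ t * c + t * c := add_le_add (key _ c1) (key _ c2)
    _ = 2 * t * c := by ring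

lemma sum_sq_shifts {m : ℕ} [NeZero m] (φ : ZMod m → ℂ) (I : Finset (ZMod m)) :
    ∑ τ : ZMod m, (‖∑ n ∈ I, φ (n + τ)‖)^2
      ≤ ∑ x ∈ I, ∑ y ∈ I, ‖corr φ (y - x)‖ := by
  have key : ∑ τ : ZMod m, ((∑ n ∈ I, φ (n + τ)) * (starRingEnd ℂ) (∑ n ∈ I, φ (n + τ)))
      = ∑ x ∈ I, ∑ y ∈ I, corr φ (y - x) := by
    have expand : ∀ τ : ZMod m,
        (∑ n ∈ I, φ (n + τ)) * (starRingEnd ℂ) (∑ n ∈ I, φ (n + τ))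
        = ∑ x ∈ I, ∑ y ∈ I, φ (x + τ) * (starRingEnd ℂ) (φ (y + τ)) := by
      intro τ
      rw [map_sum, Finset.sum_mul_sum]
    rw [Finset.sum_congr rfl fun τ _ => expand τ, Finset.sum_comm]
    refine Finset.sum_congr rfl fun x _ => ?_
    rw [Finset.sum_comm]
    refine Finset.sum_congr rfl fun y _ => ?_
    show ∑ τ : ZMod m, φ (x + τ) * (starRingEnd ℂ) (φ (y + τ)) = corr φ (y - x)
    refine Fintype.sum_bijective _ (Equiv.addLeft x).bijective _ _ fun τ => ?_
    simp only [Equiv.coe_addLeft]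
    rw [show y + τ = x + τ + (y - x) by ring]
  have habs : ∀ z : ℂ, ‖z‖^2 = (z * (starRingEnd ℂ) z).re := by
    intro z
    rw [Complex.mul_conj]
    simp [Complex.sq_norm]
  calc ∑ τ : ZMod m, (‖∑ n ∈ I, φ (n + τ)‖)^2
      = (∑ τ : ZMod m, ((∑ n ∈ I, φ (n + τ)) * (starRingEnd ℂ) (∑ n ∈ I, φ (n + τ)))).re := by
        rw [Complex.re_sum]; exact Finset.sum_congr rfl fun τ _ => habs _
    _ = (∑ x ∈ I, ∑ y ∈ I, corr φ (y - x)).re := by rw [key]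
    _ ≤ ‖∑ x ∈ I, ∑ y ∈ I, corr φ (y - x)‖ := Complex.re_le_norm _
    _ ≤ ∑ x ∈ I, ∑ y ∈ I, ‖corr φ (y - x)‖ := by
        refine le_trans (norm_sum_le _ _) (Finset.sum_le_sum fun x _ => ?_)
        exact norm_sum_le _ _

lemma corr_trivial {m : ℕ} [NeZero m] (φ : ZMod m → ℂ) (c : ℝ)
    (hφ : ∀ x, ‖φ x‖ ≤ c) (a : ZMod m) :
    ‖corr φ a‖ ≤ c^2 * m := by
  have hc0 : 0 ≤ c := le_trans (norm_nonneg _) (hφ 0)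
  calc ‖corr φ a‖ ≤ ∑ x : ZMod m, ‖φ x * (starRingEnd ℂ) (φ (x + a))‖ :=
      norm_sum_le _ _
    _ ≤ ∑ _x : ZMod m, c^2 := by
      refine Finset.sum_le_sum fun x _ => ?_
      rw [norm_mul, sq]
      exact mul_le_mul (hφ x) (by simpa using hφ (x + a)) (norm_nonneg _) hc0
    _ = c^2 * m := by simp [ZMod.card m, mul_comm]

lemma pair_bound {m : ℕ} [NeZero m] (φ : ZMod m → ℂ) (c : ℝ) (hc : 1 ≤ c)
    (hφ : ∀ x, ‖φ x‖ ≤ c)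
    (D : Finset (ZMod m)) (hD : (D.card : ℝ) ≤ c)
    (hcorr : ∀ a : ZMod m, a ∉ D → ‖corr φ a‖ ≤ c * Real.sqrt m)
    (I : Finset (ZMod m)) :
    ∑ x ∈ I, ∑ y ∈ I, ‖corr φ (y - x)‖
      ≤ c^3 * I.card * m + c * (I.card:ℝ)^2 * Real.sqrt m := by
  have hc0 : (0:ℝ) ≤ c := le_trans zero_le_one hc
  have perx : ∀ x : ZMod m, ∑ y ∈ I, ‖corr φ (y - x)‖
      ≤ c^3 * m + c * I.card * Real.sqrt m := by
    intro x
    rw [← Finset.sum_filter_add_sum_filter_not I (fun y => y - x ∈ D)]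
    have h1 : ∑ y ∈ I.filter (fun y => y - x ∈ D), ‖corr φ (y - x)‖ ≤ c^3 * m := by
      have hcard : ((I.filter (fun y => y - x ∈ D)).card : ℝ) ≤ c := by
        refine le_trans ?_ hD
        have : (I.filter (fun y => y - x ∈ D)).card ≤ D.card := by
          apply Finset.card_le_card_of_injOn (fun y => y - x)
          · intro y hy; exact (Finset.mem_filter.mp hy).2
          · intro y _ z _ h; exact sub_left_injective h
        exact_mod_cast this
      calc ∑ y ∈ I.filter (fun y => y - x ∈ D), ‖corr φ (y - x)‖
          ≤ ∑ _y ∈ I.filter (fun y => y - x ∈ D), c^2 * m :=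
            Finset.sum_le_sum fun y _ => corr_trivial φ c hφ _
        _ = (I.filter (fun y => y - x ∈ D)).card * (c^2 * m) := by
            rw [Finset.sum_const, nsmul_eq_mul]
        _ ≤ c * (c^2 * m) := by
            exact mul_le_mul_of_nonneg_right hcard (by positivity)
        _ = c^3 * m := by ring
    have h2 : ∑ y ∈ I.filter (fun y => ¬(y - x ∈ D)), ‖corr φ (y - x)‖
        ≤ c * I.card * Real.sqrt m := by
      calc ∑ y ∈ I.filter (fun y => ¬(y - x ∈ D)), ‖corr φ (y - x)‖
          ≤ ∑ _y ∈ I.filter (fun y => ¬(y - x ∈ D)), c * Real.sqrt m := by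
            refine Finset.sum_le_sum fun y hy => ?_
            simp only [Finset.mem_filter] at hy
            exact hcorr _ hy.2
        _ = (I.filter (fun y => ¬(y - x ∈ D))).card * (c * Real.sqrt m) := by
            rw [Finset.sum_const, nsmul_eq_mul]
        _ ≤ I.card * (c * Real.sqrt m) := by
            have : (I.filter (fun y => ¬(y - x ∈ D))).card ≤ I.card :=
              Finset.card_filter_le _ _
            exact mul_le_mul_of_nonneg_right (by exact_mod_cast this) (by positivity)
        _ = c * I.card * Real.sqrt m := by ring
    linarith
  calc ∑ x ∈ I, ∑ y ∈ I, ‖corr φ (y - x)‖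
      ≤ ∑ _x ∈ I, (c^3 * m + c * I.card * Real.sqrt m) :=
        Finset.sum_le_sum fun x _ => perx x
    _ = I.card * (c^3 * m + c * I.card * Real.sqrt m) := by rw [Finset.sum_const, nsmul_eq_mul]
    _ = c^3 * I.card * m + c * (I.card:ℝ)^2 * Real.sqrt m := by ring

end Helpers


set_option maxHeartbeats 1000000 in
theorem sliding_sum_condition_H_large (m : ℕ) [NeZero m] (c : ℝ) (hc : 1 ≤ c)
    (φ : ZMod m → ℂ) (hφ : ∀ x, ‖φ x‖ ≤ c)
    (D : Finset (ZMod m)) (hD : (D.card : ℝ) ≤ c)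
    (hcorr : ∀ a : ZMod m, a ∉ D → ‖corr φ a‖ ≤ c * Real.sqrt m)
    (I : Finset (ZMod m)) (hI : IsInterval I) (hIbig : Real.sqrt m < (I.card : ℝ)) :
    ‖∑ n ∈ I, φ n‖ ≤
      6 * c ^ ((4 : ℝ) / 3) * (I.card : ℝ) *
        (Real.sqrt m / (I.card : ℝ)) ^ ((1 : ℝ) / 3) := by
  set T : ℝ := (I.card : ℝ) with hTdef
  set s : ℝ := Real.sqrt m with hsdef
  have hc0 : (0:ℝ) < c := lt_of_lt_of_le one_pos hc
  have hm1 : (1:ℝ) ≤ m := by exact_mod_cast Nat.one_le_iff_ne_zero.mpr (NeZero.ne m)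
  have hs1 : (1:ℝ) ≤ s := by
    rw [hsdef, show (1:ℝ) = Real.sqrt 1 by simp]
    exact Real.sqrt_le_sqrt hm1
  have hs0 : (0:ℝ) < s := lt_of_lt_of_le one_pos hs1
  have hsT : s < T := hIbig
  have hT1 : (1:ℝ) ≤ T := le_trans hs1 hsT.le
  have hT0 : (0:ℝ) < T := lt_of_lt_of_le one_pos hT1
  have hss : s * s = m := Real.mul_self_sqrt (by positivity)
  have hTm : T ≤ m := by
    rw [hTdef]
    exact_mod_cast (Finset.card_le_card (Finset.subset_univ I)).trans_eq (by simp [ZMod.card m])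
  -- the target quantity
  set R : ℝ := c ^ ((4:ℝ)/3) * T ^ ((2:ℝ)/3) * s ^ ((1:ℝ)/3) with hRdef
  have hR0 : (0:ℝ) ≤ R := by positivity
  have hR3 : R^3 = c^4 * T^2 * s := by
    rw [hRdef, mul_pow, mul_pow,
      ← Real.rpow_natCast (c ^ ((4:ℝ)/3)) 3, ← Real.rpow_mul hc0.le,
      ← Real.rpow_natCast (T ^ ((2:ℝ)/3)) 3, ← Real.rpow_mul hT0.le,
      ← Real.rpow_natCast (s ^ ((1:ℝ)/3)) 3, ← Real.rpow_mul hs0.le]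
    norm_num
  have hRHS : 6 * c ^ ((4:ℝ)/3) * T * (s / T) ^ ((1:ℝ)/3) = 6 * R := by
    have hTdiv : T / T^((1:ℝ)/3) = T^((2:ℝ)/3) := by
      rw [show (2:ℝ)/3 = 1 - 1/3 by norm_num, Real.rpow_sub hT0, Real.rpow_one]
    rw [Real.div_rpow hs0.le hT0.le]
    rw [show 6 * c ^ ((4:ℝ)/3) * T * (s ^ ((1:ℝ)/3) / T ^ ((1:ℝ)/3))
        = 6 * (c ^ ((4:ℝ)/3) * (T / T ^ ((1:ℝ)/3)) * s ^ ((1:ℝ)/3)) by ring, hTdiv]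
  -- trivial bound
  have htriv : ‖∑ n ∈ I, φ n‖ ≤ c * T := by
    calc ‖∑ n ∈ I, φ n‖ ≤ ∑ n ∈ I, ‖φ n‖ := norm_sum_le _ _
      _ ≤ ∑ _n ∈ I, c := Finset.sum_le_sum fun n _ => hφ n
      _ = T * c := by rw [Finset.sum_const, nsmul_eq_mul]
      _ = c * T := mul_comm _ _
  rw [hRHS]
  clear_value R
  clear_value T s
  by_cases hcase : T ≤ 216 * c * s
  · -- small case: trivial bound suffices
    refine le_trans htriv ?_
    have h6 : c * T ≤ 6 * R := by
      apply cube_le_cube (by positivity) (by positivity)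
      rw [mul_pow, mul_pow, hR3]
      norm_num
      linarith [mul_le_mul_of_nonneg_left hcase (show (0:ℝ) ≤ c^3 * T^2 by positivity)]
    exact h6
  · push_neg at hcase
    -- main case : 216 * c * s < T
    have hs216 : (216:ℝ) < s := by
      nlinarith [mul_le_mul_of_nonneg_right hc hs0.le, hss, hTm, hcase, hs0]
    have hmbig : (46656:ℝ) < m := by nlinarith [hs216, hss]
    set K₁ : ℝ := (c * T * m) ^ ((1:ℝ)/3) with hK₁def
    set K₂ : ℝ := (T^2 * s / c) ^ ((1:ℝ)/3) with hK₂def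
    have hK₁3 : K₁^3 = c * T * m := cube_rt_cube (by positivity)
    have hK₂3 : K₂^3 = T^2 * s / c := cube_rt_cube (by positivity)
    have hK₁0 : (0:ℝ) < K₁ := Real.rpow_pos_of_pos (by positivity) _
    have hK₂0 : (0:ℝ) < K₂ := Real.rpow_pos_of_pos (by positivity) _
    clear_value K₁ K₂
    have hcT1 : (1:ℝ) ≤ c * T := by nlinarith
    have hK₁1 : (1:ℝ) ≤ K₁ := by
      apply cube_le_cube zero_le_one hK₁0.le
      rw [hK₁3]
      linarith [mul_le_mul_of_nonneg_right hcT1 (show (0:ℝ) ≤ (m:ℝ) by positivity), hm1]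
    have hK₁m : K₁ ≤ m / 6 := by
      apply cube_le_cube hK₁0.le (by positivity)
      rw [hK₁3]
      have ha : 216 * c * s ≤ (m:ℝ) := le_trans hcase.le hTm
      have hTmm : T * (m:ℝ) ≤ (m:ℝ) * m :=
        mul_le_mul_of_nonneg_right hTm (by positivity)
      have hA : (216 * c * s) * (T * (m:ℝ)) ≤ (m:ℝ) * ((m:ℝ) * m) :=
        mul_le_mul ha hTmm (by positivity) (by positivity)
      have h1 : 216 * c * T * (m:ℝ) ≤ (m:ℝ)^3 := by
        linarith [hA, mul_le_mul_of_nonneg_left hs1 (show (0:ℝ) ≤ 216*c*T*(m:ℝ) by positivity)]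
      linarith [h1]
    have hK₂m : K₂ ≤ m / 6 := by
      apply cube_le_cube hK₂0.le (by positivity)
      rw [hK₂3]
      have h1 : T^2 * s / c ≤ T^2 * s := by
        apply div_le_self (by positivity) hc
      have hsm : 216 * s ≤ (m:ℝ) := by
        linarith [mul_le_mul_of_nonneg_right hs216.le hs0.le, hss]
      have hT2 : T * T ≤ (m:ℝ) * m := mul_le_mul hTm hTm hT0.le (by positivity)
      have h2 : (T * T) * (216 * s) ≤ ((m:ℝ) * m) * m :=
        mul_le_mul hT2 hsm (by positivity) (by positivity)
      linarith [h1, h2]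
    set H : ℕ := ⌈K₁ + K₂⌉₊ with hHdef
    have hHlow : K₁ + K₂ ≤ (H:ℝ) := Nat.le_ceil _
    have hHup : (H:ℝ) ≤ K₁ + K₂ + 1 := (Nat.ceil_lt_add_one (by positivity)).le
    have hH1 : 1 ≤ H := by
      rw [hHdef]
      exact Nat.one_le_ceil_iff.mpr (by positivity)
    have hHpos : (0:ℝ) < H := by exact_mod_cast hH1
    have hHm : (H:ℝ) ≤ m := by linarith
    have hHmnat : H ≤ m := by exact_mod_cast hHm
    clear_value H
    -- notation for the shifted sums
    set S : ℂ := ∑ n ∈ I, φ n with hSdef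
    set g : ℕ → ℂ := fun t => ∑ n ∈ I, φ (n + (t : ZMod m)) with hgdef
    set B : ℝ := c^3 * T * m + c * T^2 * s with hBdef
    have hB0 : (0:ℝ) ≤ B := by positivity
    -- Step: pointwise comparison
    have hpt : ∀ t : ℕ, ‖S‖ ≤ ‖g t‖ + 2 * t * c := by
      intro t
      have h := shift_err φ c hφ I hI t
      calc ‖S‖ = ‖g t + (S - g t)‖ := by rw [add_sub_cancel]
        _ ≤ ‖g t‖ + ‖S - g t‖ := norm_add_le _ _
        _ ≤ ‖g t‖ + 2 * t * c := by
            exact add_le_add_right h _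
    -- Step: Gauss sum bound
    have hgauss : ∑ t ∈ Finset.range H, (2 * (t:ℝ) * c) ≤ c * (H:ℝ)^2 := by
      have hnat := Finset.sum_range_id_mul_two H
      have h2 : ((∑ t ∈ Finset.range H, t : ℕ) : ℝ) * 2 ≤ (H:ℝ) * H := by
        have : (∑ t ∈ Finset.range H, t) * 2 ≤ H * H :=
          hnat ▸ Nat.mul_le_mul_left H (Nat.sub_le H 1)
        exact_mod_cast this
      push_cast at h2
      calc ∑ t ∈ Finset.range H, (2 * (t:ℝ) * c)
          = (∑ t ∈ Finset.range H, (t:ℝ)) * (2 * c) := by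
            rw [Finset.sum_mul]
            exact Finset.sum_congr rfl fun t _ => by ring
        _ ≤ ((H:ℝ) * H / 2) * (2 * c) := by
            apply mul_le_mul_of_nonneg_right _ (by positivity)
            linarith
        _ = c * (H:ℝ)^2 := by ring
    -- Step: averaged bound
    have hstep3 : (H:ℝ) * ‖S‖ ≤ (∑ t ∈ Finset.range H, ‖g t‖) + c * H^2 := by
      calc (H:ℝ) * ‖S‖ = ∑ _t ∈ Finset.range H, ‖S‖ := by
            rw [Finset.sum_const, Finset.card_range, nsmul_eq_mul]
        _ ≤ ∑ t ∈ Finset.range H, (‖g t‖ + 2 * t * c) :=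
            Finset.sum_le_sum fun t _ => hpt t
        _ = (∑ t ∈ Finset.range H, ‖g t‖) + ∑ t ∈ Finset.range H, (2 * (t:ℝ) * c) :=
            Finset.sum_add_distrib
        _ ≤ _ := by linarith [hgauss]
    -- Step: second moment bound
    have hstep4 : ∑ t ∈ Finset.range H, (‖g t‖)^2 ≤ B := by
      have hinj : Set.InjOn (fun t : ℕ => (t : ZMod m)) (Finset.range H) := by
        intro t ht u hu h
        simp only [Finset.coe_range, Set.mem_Iio] at ht hu
        have ht' : t < m := lt_of_lt_of_le ht hHmnat
        have hu' : u < m := lt_of_lt_of_le hu hHmnat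
        have := congrArg ZMod.val h
        rwa [ZMod.val_natCast_of_lt ht', ZMod.val_natCast_of_lt hu'] at this
      have h1 : ∑ t ∈ Finset.range H, (‖g t‖)^2
          = ∑ τ ∈ (Finset.range H).image (fun t : ℕ => (t : ZMod m)),
              (‖∑ n ∈ I, φ (n + τ)‖)^2 := by
        rw [Finset.sum_image (fun x hx y hy h => hinj (by simpa using hx) (by simpa using hy) h)]
      rw [h1]
      calc ∑ τ ∈ (Finset.range H).image (fun t : ℕ => (t : ZMod m)),
              (‖∑ n ∈ I, φ (n + τ)‖)^2
          ≤ ∑ τ : ZMod m, (‖∑ n ∈ I, φ (n + τ)‖)^2 :=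
            Finset.sum_le_sum_of_subset_of_nonneg (Finset.subset_univ _)
              (fun τ _ _ => by positivity)
        _ ≤ ∑ x ∈ I, ∑ y ∈ I, ‖corr φ (y - x)‖ := sum_sq_shifts φ I
        _ ≤ B := by
            rw [hBdef, hTdef, hsdef]
            exact pair_bound φ c hc hφ D hD
              (fun a ha => by rw [← hsdef]; exact hcorr a ha) I
    -- Step: Cauchy-Schwarz
    have hstep5 : ∑ t ∈ Finset.range H, ‖g t‖ ≤ Real.sqrt ((H:ℝ) * B) := by
      rw [show Real.sqrt ((H:ℝ) * B) = Real.sqrt ((H:ℝ) * B) from rfl]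
      apply Real.le_sqrt_of_sq_le
      calc (∑ t ∈ Finset.range H, ‖g t‖)^2
          ≤ (Finset.range H).card * ∑ t ∈ Finset.range H, (‖g t‖)^2 :=
            sq_sum_le_card_mul_sum_sq
        _ = (H:ℝ) * ∑ t ∈ Finset.range H, (‖g t‖)^2 := by rw [Finset.card_range]
        _ ≤ (H:ℝ) * B := by
            exact mul_le_mul_of_nonneg_left hstep4 (by positivity)
    -- combine: abs S ≤ sqrt (B / H) + c * H
    have hstep6 : ‖S‖ ≤ Real.sqrt (B / H) + c * H := by
      have hdiv : Real.sqrt ((H:ℝ) * B) / H = Real.sqrt (B / H) := by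
        rw [show (B:ℝ) / H = (H:ℝ) * B / (H:ℝ)^2 by field_simp,
          Real.sqrt_div (by positivity), Real.sqrt_sq hHpos.le]
      rw [← hdiv]
      rw [show Real.sqrt ((H:ℝ) * B) / H + c * H = (Real.sqrt ((H:ℝ) * B) + c * (H:ℝ)^2) / H by
        field_simp]
      rw [le_div_iff₀ hHpos]
      calc ‖S‖ * H = (H:ℝ) * ‖S‖ := mul_comm _ _
        _ ≤ (∑ t ∈ Finset.range H, ‖g t‖) + c * H^2 := hstep3
        _ ≤ Real.sqrt ((H:ℝ) * B) + c * (H:ℝ)^2 := by linarith [hstep5]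
    -- bound sqrt (B / H)
    have hBH : B / H ≤ (c * K₁)^2 + (c * K₂)^2 := by
      have e1 : c^3 * T * (m:ℝ) / K₁ = (c * K₁)^2 := by
        rw [div_eq_iff hK₁0.ne']
        have : (c * K₁)^2 * K₁ = c^2 * K₁^3 := by ring
        rw [this, hK₁3]; ring
      have e2 : c * T^2 * s / K₂ = (c * K₂)^2 := by
        rw [div_eq_iff hK₂0.ne']
        have : (c * K₂)^2 * K₂ = c^2 * K₂^3 := by ring
        rw [this, hK₂3]; field_simp
      have h1 : c^3 * T * (m:ℝ) / H ≤ c^3 * T * (m:ℝ) / K₁ := by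
        apply div_le_div_of_nonneg_left (by positivity) hK₁0
        linarith [hK₂0.le]
      have h2 : c * T^2 * s / H ≤ c * T^2 * s / K₂ := by
        apply div_le_div_of_nonneg_left (by positivity) hK₂0
        linarith [hK₁0.le]
      calc B / H = c^3 * T * (m:ℝ) / H + c * T^2 * s / H := by rw [hBdef]; ring
        _ ≤ c^3 * T * (m:ℝ) / K₁ + c * T^2 * s / K₂ := add_le_add h1 h2
        _ = (c * K₁)^2 + (c * K₂)^2 := by rw [e1, e2]
    have hsqrtBH : Real.sqrt (B / H) ≤ c * K₁ + c * K₂ := by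
      calc Real.sqrt (B / H) ≤ Real.sqrt ((c * K₁)^2 + (c * K₂)^2) :=
            Real.sqrt_le_sqrt hBH
        _ ≤ Real.sqrt ((c * K₁)^2) + Real.sqrt ((c * K₂)^2) :=
            sqrt_add_le' (by positivity) (by positivity)
        _ = c * K₁ + c * K₂ := by
            rw [Real.sqrt_sq (by positivity), Real.sqrt_sq (by positivity)]
    -- final comparisons with R
    have hcK₁ : 2 * (c * K₁) ≤ 2 * R := by
      have : c * K₁ ≤ R := by
        apply cube_le_cube (by positivity) hR0
        rw [mul_pow, hK₁3, hR3]
        have hTm' : T * (m:ℝ) ≤ T^2 * s := by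
          rw [← hss]
          linarith [mul_le_mul_of_nonneg_right hsT.le (show (0:ℝ) ≤ T * s by positivity)]
        linarith [mul_le_mul_of_nonneg_left hTm' (show (0:ℝ) ≤ c^4 by positivity)]
      linarith
    have hcK₂ : c * K₂ ≤ R := by
      apply cube_le_cube (by positivity) hR0
      rw [mul_pow, hK₂3, hR3]
      rw [show c^3 * (T^2 * s / c) = c^2 * T^2 * s by field_simp]
      linarith [mul_le_mul_of_nonneg_left (show (1:ℝ) ≤ c^2 from one_le_pow₀ hc)
        (show (0:ℝ) ≤ c^2 * T^2 * s by positivity)]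
    have hcR : c ≤ R := by
      apply cube_le_cube hc0.le hR0
      rw [hR3]
      have h1 : (1:ℝ) ≤ T^2 * s := by
        have := mul_le_mul (one_le_pow₀ hT1 : (1:ℝ) ≤ T^2) hs1 zero_le_one (by positivity)
        linarith
      have h2 : c^3 ≤ c^4 := by
        linarith [mul_le_mul_of_nonneg_left hc (show (0:ℝ) ≤ c^3 by positivity)]
      linarith [mul_le_mul_of_nonneg_left h1 (show (0:ℝ) ≤ c^4 by positivity), h2]
    calc ‖S‖ ≤ Real.sqrt (B / H) + c * H := hstep6
      _ ≤ (c * K₁ + c * K₂) + c * (K₁ + K₂ + 1) := by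
          refine add_le_add hsqrtBH ?_
          exact mul_le_mul_of_nonneg_left hHup hc0.le
      _ = 2 * (c * K₁) + 2 * (c * K₂) + c := by ring
      _ ≤ 2 * R + 2 * R + R := by linarith
      _ ≤ 6 * R := by linarith
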